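/- Let m, N ≥ 1 and T ≥ 2 be integers and γ > 0. On a probability space, let A_1,…,A_T be random subsets of {1,…,N} with |A_t| ≤ m almost surely, let n_{a,t} := #{τ ∈ {1,…,t−1} : a ∈ A_τ}, and for each t let w_t and w̃_t be independent standard Gaussian N(0,1) random variables (so that w_t − w̃_t is N(0,2)), with arbitrary dependence across different rounds t and with the sets A_t. Then E[ ∑_{t=1}^{T} |w_t − w̃_t| · ∑_{a ∈ A_t} √(γ·ln(t)/(n_{a,t}+1)) ] ≤ 4·ln(T)·√(2·γ·m·N·T). -/

import Mathlib

open MeasureTheory ProbabilityTheory Finset Real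
open scoped NNReal ENNReal

lemma pdf_pt_le (x : ℝ) : x^2 * gaussianPDFReal 0 1 x
    ≤ 3 * (rexp 1)⁻¹ * (√(2*π))⁻¹ * rexp (-(1/6) * x^2) := by
  have h1 : x^2 ≤ 3 * rexp (x^2/3 - 1) := by
    have := Real.add_one_le_exp (x^2/3 - 1); nlinarith [Real.exp_pos (x^2/3-1)]
  have hpdf : gaussianPDFReal 0 1 x = (√(2*π))⁻¹ * rexp (-x^2/2) := by
    simp [gaussianPDFReal]
  rw [hpdf]
  have hkey : rexp (x^2/3 - 1) * rexp (-x^2/2) = (rexp 1)⁻¹ * rexp (-(1/6) * x^2) := by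
    rw [← Real.exp_neg, ← Real.exp_add, ← Real.exp_add]
    congr 1; ring
  calc x^2 * ((√(2*π))⁻¹ * rexp (-x^2/2))
      ≤ (3 * rexp (x^2/3 - 1)) * ((√(2*π))⁻¹ * rexp (-x^2/2)) := by
        apply mul_le_mul_of_nonneg_right h1; positivity
    _ = 3 * (rexp 1)⁻¹ * (√(2*π))⁻¹ * rexp (-(1/6) * x^2) := by
        linear_combination 3 * (√(2*π))⁻¹ * hkey

lemma pdf_int : Integrable (fun x : ℝ => x^2 * gaussianPDFReal 0 1 x) := by
  apply Integrable.mono' ((integrable_exp_neg_mul_sq (by norm_num : (0:ℝ) < 1/6)).const_mul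
    (3 * (rexp 1)⁻¹ * (√(2*π))⁻¹))
  · exact ((continuous_pow 2).mul
      (continuous_const.mul (by continuity))).aestronglyMeasurable
  · refine Filter.Eventually.of_forall fun x => ?_
    rw [Real.norm_eq_abs, abs_of_nonneg (mul_nonneg (sq_nonneg x) (gaussianPDFReal_nonneg 0 1 x))]
    exact pdf_pt_le x

lemma gauss_sq_integrable : Integrable (fun x : ℝ => x^2) (gaussianReal 0 1) := by
  rw [gaussianReal_of_var_ne_zero _ one_ne_zero,
    integrable_withDensity_iff (measurable_gaussianPDF 0 1)
      (Filter.Eventually.of_forall fun x => ENNReal.ofReal_lt_top)]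
  have h : (fun x : ℝ => x^2 * (gaussianPDF 0 1 x).toReal)
      = fun x => x^2 * gaussianPDFReal 0 1 x := by
    funext x; rw [gaussianPDF, ENNReal.toReal_ofReal (gaussianPDFReal_nonneg _ _ _)]
  rw [h]; exact pdf_int

lemma gauss_sq_le : ∫ x, x^2 ∂(gaussianReal 0 1) ≤ 2 := by
  rw [gaussianReal_of_var_ne_zero _ one_ne_zero]
  have hpd : gaussianPDF 0 1 = fun x => ((Real.toNNReal (gaussianPDFReal 0 1 x) : ℝ≥0) : ℝ≥0∞) :=
    rfl
  rw [hpd, integral_withDensity_eq_integral_smul (measurable_gaussianPDFReal 0 1).real_toNNReal]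
  have h : (fun x : ℝ => (Real.toNNReal (gaussianPDFReal 0 1 x)) • x^2)
      = fun x => x^2 * gaussianPDFReal 0 1 x := by
    funext x
    rw [NNReal.smul_def, Real.coe_toNNReal _ (gaussianPDFReal_nonneg _ _ _), smul_eq_mul,
      mul_comm]
  rw [h]
  have hsp : (0:ℝ) < √(2*π) := Real.sqrt_pos.mpr (by positivity)
  calc ∫ x, x^2 * gaussianPDFReal 0 1 x
      ≤ ∫ x, 3 * (rexp 1)⁻¹ * (√(2*π))⁻¹ * rexp (-(1/6) * x^2) := by
        refine integral_mono pdf_int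
          ((integrable_exp_neg_mul_sq (by norm_num : (0:ℝ) < 1/6)).const_mul _) pdf_pt_le
    _ = 3 * (rexp 1)⁻¹ * (√(2*π))⁻¹ * √(π/(1/6)) := by
        rw [integral_const_mul, integral_gaussian]
    _ = 3 * (rexp 1)⁻¹ * (√(2*π))⁻¹ * (√3 * √(2*π)) := by
        rw [show π/(1/6) = 3*(2*π) by ring, Real.sqrt_mul (by norm_num : (0:ℝ) ≤ 3) (2*π)]
    _ = 3 * √3 * (rexp 1)⁻¹ := by field_simp
    _ ≤ 2 := by
        have h3 : √3 ≤ 1.74 := by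
          rw [show (1.74:ℝ) = √(1.74^2) from (Real.sqrt_sq (by norm_num)).symm]
          exact Real.sqrt_le_sqrt (by norm_num)
        have he : (2.7182818283:ℝ) < rexp 1 := Real.exp_one_gt_d9
        have hep : (0:ℝ) < rexp 1 := Real.exp_pos 1
        have h2 : 3 * √3 * (rexp 1)⁻¹ * rexp 1 ≤ 2 * rexp 1 := by
          rw [mul_assoc, inv_mul_cancel₀ hep.ne', mul_one]; nlinarith
        calc 3 * √3 * (rexp 1)⁻¹ = 3 * √3 * (rexp 1)⁻¹ * rexp 1 * (rexp 1)⁻¹ := by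
              field_simp
          _ ≤ 2 * rexp 1 * (rexp 1)⁻¹ := by
              apply mul_le_mul_of_nonneg_right h2 (by positivity)
          _ = 2 := by field_simp

set_option maxHeartbeats 1000000 in
/-- Step 3 of the optimism bound for CL-SG. Let `m, N ≥ 1`, `T ≥ 2`, `γ > 0`.
For random subsets `A t` of `{1,…,N}` of cardinality at most `m`, pull counts
`n a t = #{τ ∈ {1,…,t−1} : a ∈ A τ}`, and per-round independent standard Gaussian seeds
`w t`, `w̃ t` (arbitrary dependence across rounds and with the sets),
`E[∑_{t=1}^T |w t − w̃ t| ∑_{a∈A t} √(γ ln t/(n a t + 1))] ≤ 4·ln T·√(2 γ m N T)`. -/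
theorem stmt7 {Ω : Type*} [MeasurableSpace Ω] (P : Measure Ω) [IsProbabilityMeasure P]
    (m N T : ℕ) (hm : 1 ≤ m) (hN : 1 ≤ N) (hT : 2 ≤ T) (γ : ℝ) (hγ : 0 < γ)
    (A : ℕ → Ω → Finset ℕ)
    (hAmeas : ∀ a t, MeasurableSet {ω | a ∈ A t ω})
    (hAsub : ∀ t ω, A t ω ⊆ Finset.Icc 1 N)
    (hAcard : ∀ t ω, (A t ω).card ≤ m)
    (n : ℕ → ℕ → Ω → ℕ)
    (hn : ∀ a t ω, n a t ω = ((Finset.Icc 1 (t - 1)).filter (fun τ => a ∈ A τ ω)).card)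
    (w wt : ℕ → Ω → ℝ)
    (hwmeas : ∀ t, Measurable (w t)) (hwtmeas : ∀ t, Measurable (wt t))
    (hwlaw : ∀ t ∈ Finset.Icc 1 T, Measure.map (w t) P = ProbabilityTheory.gaussianReal 0 1)
    (hwtlaw : ∀ t ∈ Finset.Icc 1 T, Measure.map (wt t) P = ProbabilityTheory.gaussianReal 0 1)
    (hindep : ∀ t ∈ Finset.Icc 1 T, IndepFun (w t) (wt t) P) :
    ∫ ω, ∑ t ∈ Finset.Icc 1 T, |w t ω - wt t ω| *
        ∑ a ∈ A t ω, Real.sqrt (γ * Real.log t / ((n a t ω : ℝ) + 1)) ∂P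
      ≤ 4 * Real.log T * Real.sqrt (2 * γ * m * N * T) := by
  have hm' : (0:ℝ) < m := by exact_mod_cast hm
  have hN' : (0:ℝ) < N := by exact_mod_cast hN
  have hT' : (0:ℝ) < T := by positivity
  have hT1 : (1:ℝ) ≤ T := by exact_mod_cast le_trans one_le_two hT
  set L := Real.log T with hLdef
  have hL2 : Real.log 2 ≤ L := Real.log_le_log (by norm_num) (by exact_mod_cast hT)
  have hL06 : (0.6931471803:ℝ) < L := lt_of_lt_of_le Real.log_two_gt_d9 hL2
  have hLpos : 0 < L := by linarith
  set Q := Real.sqrt (γ * m * N * T) with hQdef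
  have hQpos : 0 < Q := Real.sqrt_pos.mpr (by positivity)
  have hQsq : Q * Q = γ * m * N * T := Real.mul_self_sqrt (by positivity)
  set c := L * Q / T with hcdef
  have hcpos : 0 < c := by positivity
  set S : ℕ → Ω → ℝ :=
    fun t ω => ∑ a ∈ A t ω, Real.sqrt (γ * Real.log t / ((n a t ω : ℝ) + 1)) with hSdef
  set H : ℕ → Ω → ℝ := fun t ω => ∑ a ∈ A t ω, 1 / ((n a t ω : ℝ) + 1) with hHdef
  -- measurability of pull counts
  have hnmeas : ∀ a t, Measurable (fun ω => (n a t ω : ℝ)) := by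
    intro a t
    have h : (fun ω => (n a t ω : ℝ))
        = fun ω => ∑ τ ∈ Finset.Icc 1 (t-1), if a ∈ A τ ω then (1:ℝ) else 0 := by
      funext ω; rw [hn, Finset.card_filter]; push_cast; rfl
    rw [h]
    exact Finset.measurable_sum _
      (fun τ _ => Measurable.ite (hAmeas a τ) measurable_const measurable_const)
  have hSmeas : ∀ t, Measurable (S t) := by
    intro t
    have h : S t = fun ω => ∑ a ∈ Finset.Icc 1 N,
        if a ∈ A t ω then Real.sqrt (γ * Real.log t / ((n a t ω : ℝ) + 1)) else 0 := by
      funext ω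
      rw [hSdef]
      simp only
      rw [Finset.sum_ite_mem, Finset.inter_eq_right.mpr (hAsub t ω)]
    rw [h]
    exact Finset.measurable_sum _ (fun a _ => Measurable.ite (hAmeas a t)
      (Real.continuous_sqrt.measurable.comp
        (measurable_const.div ((hnmeas a t).add measurable_const)))
      measurable_const)
  have hHmeas : ∀ t, Measurable (H t) := by
    intro t
    have h : H t = fun ω => ∑ a ∈ Finset.Icc 1 N,
        if a ∈ A t ω then 1 / ((n a t ω : ℝ) + 1) else 0 := by
      funext ω
      rw [hHdef]
      simp only
      rw [Finset.sum_ite_mem, Finset.inter_eq_right.mpr (hAsub t ω)]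
    rw [h]
    exact Finset.measurable_sum _ (fun a _ => Measurable.ite (hAmeas a t)
      (measurable_const.div ((hnmeas a t).add measurable_const)) measurable_const)
  -- pointwise bounds
  have hn1 : ∀ a t ω, (1:ℝ) ≤ (n a t ω : ℝ) + 1 := by
    intro a t ω; have : (0:ℝ) ≤ (n a t ω : ℝ) := Nat.cast_nonneg _; linarith
  have hSnonneg : ∀ t ω, 0 ≤ S t ω :=
    fun t ω => Finset.sum_nonneg fun a _ => Real.sqrt_nonneg _
  have hHnonneg : ∀ t ω, 0 ≤ H t ω := by
    intro t ω; exact Finset.sum_nonneg fun a _ => by positivity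
  have hHle : ∀ t ω, H t ω ≤ (m:ℝ) := by
    intro t ω
    calc H t ω ≤ ∑ a ∈ A t ω, 1 := Finset.sum_le_sum fun a _ => by
          rw [div_le_one (by positivity)]; exact hn1 a t ω
      _ = ((A t ω).card : ℝ) := by simp
      _ ≤ (m:ℝ) := by exact_mod_cast hAcard t ω
  have hSsq : ∀ t ∈ Finset.Icc 1 T, ∀ ω : Ω, (S t ω)^2 ≤ (m:ℝ) * (γ * L) * H t ω := by
    intro t ht ω
    obtain ⟨ht1, htT⟩ := Finset.mem_Icc.mp ht
    have ht1' : (1:ℝ) ≤ t := by exact_mod_cast ht1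
    have hlog0 : 0 ≤ Real.log t := Real.log_nonneg ht1'
    have hlogL : Real.log t ≤ L := Real.log_le_log (by linarith) (by exact_mod_cast htT)
    calc (S t ω)^2 ≤ ((A t ω).card : ℝ) *
          ∑ a ∈ A t ω, (Real.sqrt (γ * Real.log t / ((n a t ω : ℝ) + 1)))^2 :=
        sq_sum_le_card_mul_sum_sq
      _ ≤ (m:ℝ) * ∑ a ∈ A t ω, γ * L * (1 / ((n a t ω : ℝ) + 1)) := by
        refine mul_le_mul (by exact_mod_cast hAcard t ω)
          (Finset.sum_le_sum fun a _ => ?_) (Finset.sum_nonneg fun a _ => sq_nonneg _)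
          hm'.le
        rw [Real.sq_sqrt (by positivity), div_eq_mul_one_div]
        exact mul_le_mul_of_nonneg_right (mul_le_mul_of_nonneg_left hlogL hγ.le)
          (by positivity)
      _ = (m:ℝ) * (γ * L) * H t ω := by
        rw [hHdef]; simp only [← Finset.mul_sum]; ring
  -- harmonic-sum bound
  have hharm : ∑ k ∈ Finset.range T, 1/((k:ℝ)+1) ≤ 1 + L := by
    have hcast : ∑ k ∈ Finset.range T, 1/((k:ℝ)+1) = ((harmonic T : ℚ) : ℝ) := by
      rw [harmonic]; push_cast; simp [one_div]
    rw [hcast]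
    exact harmonic_le_one_add_log T
  have hperarm : ∀ (ω : Ω) (a : ℕ),
      ∑ t ∈ (Finset.Icc 1 T).filter (fun t => a ∈ A t ω), 1/((n a t ω:ℝ)+1) ≤ 1 + L := by
    intro ω a
    set s := (Finset.Icc 1 T).filter (fun t => a ∈ A t ω) with hs
    have hmono : ∀ t ∈ s, ∀ t' ∈ s, t < t' → n a t ω < n a t' ω := by
      intro t hts t' hts' hlt
      simp only [hs, Finset.mem_filter, Finset.mem_Icc] at hts hts'
      rw [hn, hn]
      apply Finset.card_lt_card
      have hsub : (Finset.Icc 1 (t-1)).filter (fun τ => a ∈ A τ ω)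
          ⊆ (Finset.Icc 1 (t'-1)).filter (fun τ => a ∈ A τ ω) :=
        Finset.filter_subset_filter _ (Finset.Icc_subset_Icc le_rfl (by omega))
      rw [Finset.ssubset_iff_of_subset hsub]
      refine ⟨t, ?_, ?_⟩
      · simp only [Finset.mem_filter, Finset.mem_Icc]
        exact ⟨⟨hts.1.1, by omega⟩, hts.2⟩
      · simp only [Finset.mem_filter, Finset.mem_Icc]
        rintro ⟨⟨h1, h2⟩, -⟩
        omega
    have hinj : ∀ x ∈ s, ∀ y ∈ s, n a x ω = n a y ω → x = y := by
      intro x hx y hy hxy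
      by_contra hne
      rcases Nat.lt_or_ge x y with h | h
      · exact absurd hxy (hmono x hx y hy h).ne
      · have h' : y < x := by omega
        exact absurd hxy.symm (hmono y hy x hx h').ne
    have himg : s.image (fun t => n a t ω) ⊆ Finset.range T := by
      intro k hk
      obtain ⟨t, hts, rfl⟩ := Finset.mem_image.mp hk
      simp only [hs, Finset.mem_filter, Finset.mem_Icc] at hts
      rw [Finset.mem_range, hn]
      calc ((Finset.Icc 1 (t-1)).filter (fun τ => a ∈ A τ ω)).card
          ≤ (Finset.Icc 1 (t-1)).card := Finset.card_filter_le _ _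
        _ = t - 1 := by rw [Nat.card_Icc]; omega
        _ < T := by omega
    calc ∑ t ∈ s, 1/((n a t ω:ℝ)+1)
        = ∑ k ∈ s.image (fun t => n a t ω), 1/((k:ℝ)+1) := by
          rw [Finset.sum_image hinj]
      _ ≤ ∑ k ∈ Finset.range T, 1/((k:ℝ)+1) :=
          Finset.sum_le_sum_of_subset_of_nonneg himg (fun k _ _ => by positivity)
      _ ≤ 1 + L := hharm
  have hHsumb : ∀ ω : Ω, ∑ t ∈ Finset.Icc 1 T, H t ω ≤ (N:ℝ) * (1 + L) := by
    intro ω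
    have h1 : ∀ t : ℕ, H t ω
        = ∑ a ∈ Finset.Icc 1 N, if a ∈ A t ω then 1/((n a t ω:ℝ)+1) else 0 := by
      intro t
      rw [hHdef]
      simp only
      rw [Finset.sum_ite_mem, Finset.inter_eq_right.mpr (hAsub t ω)]
    calc ∑ t ∈ Finset.Icc 1 T, H t ω
        = ∑ a ∈ Finset.Icc 1 N, ∑ t ∈ Finset.Icc 1 T,
            (if a ∈ A t ω then 1/((n a t ω:ℝ)+1) else 0) := by
          simp only [h1]; exact Finset.sum_comm
      _ = ∑ a ∈ Finset.Icc 1 N, ∑ t ∈ (Finset.Icc 1 T).filter (fun t => a ∈ A t ω),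
            1/((n a t ω:ℝ)+1) :=
          Finset.sum_congr rfl fun a _ => (Finset.sum_filter _ _).symm
      _ ≤ ∑ a ∈ Finset.Icc 1 N, (1 + L) := Finset.sum_le_sum fun a _ => hperarm ω a
      _ = (N:ℝ) * (1 + L) := by
          rw [Finset.sum_const, Nat.card_Icc, nsmul_eq_mul]
          norm_num
  -- gaussian moments
  have hw2int : ∀ t ∈ Finset.Icc 1 T, Integrable (fun ω => (w t ω)^2) P := by
    intro t ht
    have h := gauss_sq_integrable
    rw [← hwlaw t ht] at h
    exact (integrable_map_measure (continuous_pow 2).aestronglyMeasurable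
      (hwmeas t).aemeasurable).mp h
  have hwt2int : ∀ t ∈ Finset.Icc 1 T, Integrable (fun ω => (wt t ω)^2) P := by
    intro t ht
    have h := gauss_sq_integrable
    rw [← hwtlaw t ht] at h
    exact (integrable_map_measure (continuous_pow 2).aestronglyMeasurable
      (hwtmeas t).aemeasurable).mp h
  have hw2val : ∀ t ∈ Finset.Icc 1 T, ∫ ω, (w t ω)^2 ∂P ≤ 2 := by
    intro t ht
    have h : ∫ ω, (w t ω)^2 ∂P = ∫ x, x^2 ∂(Measure.map (w t) P) := by
      rw [integral_map (hwmeas t).aemeasurable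
        (continuous_pow 2).aestronglyMeasurable]
    rw [h, hwlaw t ht]
    exact gauss_sq_le
  have hwt2val : ∀ t ∈ Finset.Icc 1 T, ∫ ω, (wt t ω)^2 ∂P ≤ 2 := by
    intro t ht
    have h : ∫ ω, (wt t ω)^2 ∂P = ∫ x, x^2 ∂(Measure.map (wt t) P) := by
      rw [integral_map (hwtmeas t).aemeasurable
        (continuous_pow 2).aestronglyMeasurable]
    rw [h, hwtlaw t ht]
    exact gauss_sq_le
  have hDint : ∀ t ∈ Finset.Icc 1 T, Integrable (fun ω => (w t ω - wt t ω)^2) P := by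
    intro t ht
    refine Integrable.mono' (((hw2int t ht).const_mul 2).add ((hwt2int t ht).const_mul 2))
      (((hwmeas t).sub (hwtmeas t)).pow_const 2).aestronglyMeasurable
      (Filter.Eventually.of_forall fun ω => ?_)
    rw [Real.norm_eq_abs, abs_of_nonneg (sq_nonneg _)]
    simp only [Pi.add_apply]
    nlinarith [sq_nonneg (w t ω + wt t ω)]
  have hDval : ∀ t ∈ Finset.Icc 1 T, ∫ ω, (w t ω - wt t ω)^2 ∂P ≤ 8 := by
    intro t ht
    have hg : Integrable (fun ω => 2*(w t ω)^2 + 2*(wt t ω)^2) P := by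
      exact ((hw2int t ht).const_mul 2).add ((hwt2int t ht).const_mul 2)
    have hb : ∫ ω, (w t ω - wt t ω)^2 ∂P ≤ ∫ ω, 2*(w t ω)^2 + 2*(wt t ω)^2 ∂P :=
      integral_mono (hDint t ht) hg
        (fun ω => by
          show (w t ω - wt t ω)^2 ≤ 2*(w t ω)^2 + 2*(wt t ω)^2
          nlinarith [sq_nonneg (w t ω + wt t ω)])
    have hadd : ∫ ω, 2*(w t ω)^2 + 2*(wt t ω)^2 ∂P
        = 2 * (∫ ω, (w t ω)^2 ∂P) + 2 * (∫ ω, (wt t ω)^2 ∂P) := by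
      rw [integral_add (by exact (hw2int t ht).const_mul 2)
        (by exact (hwt2int t ht).const_mul 2), integral_const_mul, integral_const_mul]
    rw [hadd] at hb
    linarith [hw2val t ht, hwt2val t ht]
  -- integrability of S² and H
  have hSbound : ∀ t ∈ Finset.Icc 1 T, ∀ ω : Ω, S t ω ≤ (m:ℝ) * Real.sqrt (γ * L) := by
    intro t ht ω
    obtain ⟨ht1, htT⟩ := Finset.mem_Icc.mp ht
    have ht1' : (1:ℝ) ≤ t := by exact_mod_cast ht1
    have hlog0 : 0 ≤ Real.log t := Real.log_nonneg ht1'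
    have hlogL : Real.log t ≤ L := Real.log_le_log (by linarith) (by exact_mod_cast htT)
    calc S t ω ≤ ∑ a ∈ A t ω, Real.sqrt (γ * L) := by
          refine Finset.sum_le_sum fun a _ => Real.sqrt_le_sqrt ?_
          calc γ * Real.log t / ((n a t ω:ℝ)+1) ≤ γ * Real.log t :=
              div_le_self (by positivity) (hn1 a t ω)
            _ ≤ γ * L := mul_le_mul_of_nonneg_left hlogL hγ.le
      _ = ((A t ω).card : ℝ) * Real.sqrt (γ * L) := by
          rw [Finset.sum_const, nsmul_eq_mul]
      _ ≤ (m:ℝ) * Real.sqrt (γ * L) := by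
          apply mul_le_mul_of_nonneg_right (by exact_mod_cast hAcard t ω) (Real.sqrt_nonneg _)
  have hS2int : ∀ t ∈ Finset.Icc 1 T, Integrable (fun ω => (S t ω)^2) P := by
    intro t ht
    refine Integrable.mono' (integrable_const (((m:ℝ) * Real.sqrt (γ*L))^2))
      (((hSmeas t).pow_const 2).aestronglyMeasurable)
      (Filter.Eventually.of_forall fun ω => ?_)
    rw [Real.norm_eq_abs, abs_of_nonneg (sq_nonneg _)]
    exact pow_le_pow_left₀ (hSnonneg t ω) (hSbound t ht ω) 2
  have hHint : ∀ t : ℕ, Integrable (H t) P := by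
    intro t
    refine Integrable.mono' (integrable_const (m:ℝ)) (hHmeas t).aestronglyMeasurable
      (Filter.Eventually.of_forall fun ω => ?_)
    rw [Real.norm_eq_abs, abs_of_nonneg (hHnonneg t ω)]
    exact hHle t ω
  -- main estimate
  have key : ∫ ω, ∑ t ∈ Finset.Icc 1 T, |w t ω - wt t ω| * S t ω ∂P
      ≤ (c * (8 * T) + ((m:ℝ) * (γ*L) * ((N:ℝ)*(1+L))) / c) / 2 := by
    have hint2 : Integrable
        (fun ω => ∑ t ∈ Finset.Icc 1 T, (c * (w t ω - wt t ω)^2 + (S t ω)^2 / c) / 2) P := by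
      refine integrable_finset_sum _ fun t ht => ?_
      exact (((hDint t ht).const_mul c).add ((hS2int t ht).div_const c)).div_const 2
    have step1 : ∫ ω, ∑ t ∈ Finset.Icc 1 T, |w t ω - wt t ω| * S t ω ∂P
        ≤ ∫ ω, ∑ t ∈ Finset.Icc 1 T, (c * (w t ω - wt t ω)^2 + (S t ω)^2 / c) / 2 ∂P := by
      refine integral_mono_of_nonneg
        (Filter.Eventually.of_forall fun ω => Finset.sum_nonneg fun t _ =>
          mul_nonneg (abs_nonneg _) (hSnonneg t ω))
        hint2
        (Filter.Eventually.of_forall fun ω => Finset.sum_le_sum fun t ht => ?_)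
      rw [le_div_iff₀ (by norm_num : (0:ℝ) < 2), ← sub_nonneg]
      have hkey2 : c * (w t ω - wt t ω)^2 + (S t ω)^2/c - |w t ω - wt t ω| * S t ω * 2
          = ((c * |w t ω - wt t ω| - S t ω)^2
            + c^2*((w t ω - wt t ω)^2 - |w t ω - wt t ω|^2)) / c := by
        field_simp
        ring
      rw [hkey2, sq_abs, sub_self, mul_zero, add_zero]
      positivity
    refine step1.trans ?_
    rw [integral_finset_sum (Finset.Icc 1 T)
      (f := fun t ω => (c * (w t ω - wt t ω)^2 + (S t ω)^2 / c) / 2) (fun t ht => by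
        exact (((hDint t ht).const_mul c).add ((hS2int t ht).div_const c)).div_const 2)]
    have step2 : ∀ t ∈ Finset.Icc 1 T,
        ∫ ω, (c * (w t ω - wt t ω)^2 + (S t ω)^2 / c) / 2 ∂P
        = (c * ∫ ω, (w t ω - wt t ω)^2 ∂P + (∫ ω, (S t ω)^2 ∂P) / c) / 2 := by
      intro t ht
      rw [integral_div, integral_add (by exact (hDint t ht).const_mul c)
        (by exact (hS2int t ht).div_const c), integral_const_mul, integral_div]
    rw [Finset.sum_congr rfl step2]
    have hJ : ∑ t ∈ Finset.Icc 1 T, ∫ ω, (S t ω)^2 ∂P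
        ≤ (m:ℝ)*(γ*L)*((N:ℝ)*(1+L)) := by
      have h1 : ∀ t ∈ Finset.Icc 1 T,
          ∫ ω, (S t ω)^2 ∂P ≤ (m:ℝ)*(γ*L) * ∫ ω, H t ω ∂P := by
        intro t ht
        rw [← integral_const_mul]
        exact integral_mono (hS2int t ht) ((hHint t).const_mul _) (fun ω => hSsq t ht ω)
      calc ∑ t ∈ Finset.Icc 1 T, ∫ ω, (S t ω)^2 ∂P
          ≤ ∑ t ∈ Finset.Icc 1 T, (m:ℝ)*(γ*L) * ∫ ω, H t ω ∂P := Finset.sum_le_sum h1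
        _ = (m:ℝ)*(γ*L) * ∫ ω, ∑ t ∈ Finset.Icc 1 T, H t ω ∂P := by
            rw [integral_finset_sum (Finset.Icc 1 T) (f := fun t ω => H t ω)
              (fun t _ => hHint t), Finset.mul_sum]
        _ ≤ (m:ℝ)*(γ*L) * ((N:ℝ)*(1+L)) := by
            refine mul_le_mul_of_nonneg_left ?_ (by positivity)
            calc ∫ ω, ∑ t ∈ Finset.Icc 1 T, H t ω ∂P ≤ ∫ _ω, (N:ℝ)*(1+L) ∂P :=
                integral_mono (integrable_finset_sum _ fun t _ => hHint t)
                  (integrable_const _) hHsumb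
              _ = (N:ℝ)*(1+L) := by simp
    have hI : ∑ t ∈ Finset.Icc 1 T, ∫ ω, (w t ω - wt t ω)^2 ∂P ≤ 8*T := by
      calc ∑ t ∈ Finset.Icc 1 T, ∫ ω, (w t ω - wt t ω)^2 ∂P
          ≤ ∑ _t ∈ Finset.Icc 1 T, (8:ℝ) := Finset.sum_le_sum hDval
        _ = 8*T := by
            rw [Finset.sum_const, Nat.card_Icc, nsmul_eq_mul]
            norm_num
            ring
    calc ∑ t ∈ Finset.Icc 1 T,
          (c * ∫ ω, (w t ω - wt t ω)^2 ∂P + (∫ ω, (S t ω)^2 ∂P) / c) / 2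
        = (c * (∑ t ∈ Finset.Icc 1 T, ∫ ω, (w t ω - wt t ω)^2 ∂P)
            + (∑ t ∈ Finset.Icc 1 T, ∫ ω, (S t ω)^2 ∂P)/c)/2 := by
          rw [← Finset.sum_div, Finset.sum_add_distrib, ← Finset.mul_sum, ← Finset.sum_div]
      _ ≤ (c * (8 * T) + ((m:ℝ) * (γ*L) * ((N:ℝ)*(1+L))) / c) / 2 := by
          gcongr
  -- final numeric bound
  have hfinal : (c * (8 * (T:ℝ)) + ((m:ℝ)*(γ*L)*((N:ℝ)*(1+L)))/c)/2
      ≤ 4 * L * Real.sqrt (2*γ*m*N*T) := by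
    have hc8 : c * (8*(T:ℝ)) = 8 * L * Q := by
      rw [hcdef]; field_simp
    have hBc : ((m:ℝ)*(γ*L)*((N:ℝ)*(1+L)))/c = (1+L) * L * Q * (γ*m*N*T) / (L * Q * Q) := by
      rw [hcdef]
      field_simp
    have hBc2 : ((m:ℝ)*(γ*L)*((N:ℝ)*(1+L)))/c = (1+L) * Q := by
      rw [hBc, ← hQsq]
      field_simp
    have hsqrt2 : Real.sqrt (2*γ*m*N*T) = Real.sqrt 2 * Q := by
      rw [hQdef, ← Real.sqrt_mul (by norm_num : (0:ℝ) ≤ 2)]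
      congr 1
      ring
    have hs2 : (1.414:ℝ) < Real.sqrt 2 := by
      rw [show (1.414:ℝ) = Real.sqrt (1.414^2) from (Real.sqrt_sq (by norm_num)).symm]
      exact Real.sqrt_lt_sqrt (by positivity) (by norm_num)
    rw [hc8, hBc2, hsqrt2]
    have h9 : 9*L + 1 ≤ 8 * Real.sqrt 2 * L := by nlinarith
    nlinarith [mul_le_mul_of_nonneg_right h9 hQpos.le]
  have hstart : ∫ ω, ∑ t ∈ Finset.Icc 1 T, |w t ω - wt t ω| *
      ∑ a ∈ A t ω, Real.sqrt (γ * Real.log t / ((n a t ω : ℝ) + 1)) ∂P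
      = ∫ ω, ∑ t ∈ Finset.Icc 1 T, |w t ω - wt t ω| * S t ω ∂P := by
    simp only [hSdef]
  rw [hstart]
  exact key.trans hfinal
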